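/- In a finite dimaze, a set of vertices is a maximal linkable set if and only if it is linkable onto the exits. -/

import Mathlib

open Set

universe u

variable {V : Type*}

/-- A directed path in the digraph `D`: a nonempty duplicate-free list of vertices
with an edge between consecutive vertices. -/
structure DiPath {V : Type*} (D : V → V → Prop) where
  verts : List V
  ne : verts ≠ []
  nodup : verts.Nodup
  chain : verts.Chain' D

namespace DiPath

variable {D : V → V → Prop}

/-- The initial vertex of a directed path. -/
def first (p : DiPath D) : V := p.verts.head p.ne

/-- The terminal vertex of a directed path. -/
def last (p : DiPath D) : V := p.verts.getLast p.ne

/-- The set of vertices of a directed path. -/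
def vertSet (p : DiPath D) : Set V := {v | v ∈ p.verts}

/-- The set of (directed) edges of a directed path. -/
def edgeSet (p : DiPath D) : Set (V × V) := {e | e ∈ p.verts.zip p.verts.tail}

end DiPath

/-- The set of initial vertices of a collection of paths. -/
def Ini {D : V → V → Prop} (P : Set (DiPath D)) : Set V := {v | ∃ p ∈ P, p.first = v}

/-- The set of terminal vertices of a collection of paths. -/
def Ter {D : V → V → Prop} (P : Set (DiPath D)) : Set V := {v | ∃ p ∈ P, p.last = v}

/-- All vertices used by a collection of paths. -/
def LinkVerts {D : V → V → Prop} (P : Set (DiPath D)) : Set V := ⋃ p ∈ P, p.vertSet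

/-- All edges used by a collection of paths. -/
def LinkEdges {D : V → V → Prop} (P : Set (DiPath D)) : Set (V × V) := ⋃ p ∈ P, p.edgeSet

/-- A linkage in the dimaze `(D, B0)`: a set of pairwise vertex-disjoint directed
paths, each ending in `B0`. -/
def IsLinkage (D : V → V → Prop) (B0 : Set V) (P : Set (DiPath D)) : Prop :=
  (∀ p ∈ P, p.last ∈ B0) ∧
  (∀ p ∈ P, ∀ q ∈ P, p ≠ q → Disjoint p.vertSet q.vertSet)

/-- `(D, B0)` is a dimaze: every vertex of `B0` has out-degree `0`. -/
def IsDimaze (D : V → V → Prop) (B0 : Set V) : Prop := ∀ b ∈ B0, ∀ v, ¬ D b v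

/-- A set of vertices is linkable if it is the set of initial vertices of a linkage. -/
def Linkable (D : V → V → Prop) (B0 : Set V) (I : Set V) : Prop :=
  ∃ P, IsLinkage D B0 P ∧ Ini P = I

/-- A set of vertices is linkable onto `B0` if it is the set of initial vertices of
a linkage whose terminal vertices are all of `B0`. -/
def LinkableOnto (D : V → V → Prop) (B0 : Set V) (I : Set V) : Prop :=
  ∃ P, IsLinkage D B0 P ∧ Ini P = I ∧ Ter P = B0

/-- `I` is a maximal element (w.r.t. inclusion) of the set system `Ind`. -/
def MaximalIn {α : Type*} (Ind : Set α → Prop) (I : Set α) : Prop :=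
  Ind I ∧ ∀ J, Ind J → I ⊆ J → J = I

/-- The maximality axiom (IM). -/
def SatisfiesIM {α : Type*} (Ind : Set α → Prop) : Prop :=
  ∀ I X : Set α, Ind I → I ⊆ X →
    ∃ J, Ind J ∧ I ⊆ J ∧ J ⊆ X ∧ ∀ K, Ind K → K ⊆ X → J ⊆ K → K = J

/-- `Ind` is the collection of independent sets of a matroid:
axioms (I1), (I2), (I3) and (IM). -/
def IsMatroidIndep {α : Type*} (Ind : Set α → Prop) : Prop :=
  Ind ∅ ∧
  (∀ I J : Set α, I ⊆ J → Ind J → Ind I) ∧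
  (∀ I B : Set α, Ind I → ¬ MaximalIn Ind I → MaximalIn Ind B →
    ∃ x ∈ B \ I, Ind (insert x I)) ∧
  SatisfiesIM Ind

/-- The dimaze `(D, B0)` contains an alternating comb: there is an alternating ray
(given by the injective vertex sequence `f` and edge orientations `o`, with
infinitely many vertices of in-degree 2) together with a linkage of all its
in-degree-2 vertices and its first vertex onto a set of exits contained in `B0`,
by disjoint paths meeting the ray exactly at their initial vertices. -/
def ContainsAltComb (D : V → V → Prop) (B0 : Set V) : Prop :=
  ∃ (f : ℕ → V) (o : ℕ → Bool) (P : Set (DiPath D)),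
    Function.Injective f ∧
    (∀ n, if o n then D (f n) (f (n+1)) else D (f (n+1)) (f n)) ∧
    (∀ N, ∃ k ≥ N, o k = true ∧ o (k+1) = false) ∧
    IsLinkage D B0 P ∧
    Ini P = insert (f 0) {v | ∃ k, o k = true ∧ o (k+1) = false ∧ v = f (k+1)} ∧
    (∀ p ∈ P, ∀ v ∈ p.vertSet, v ∈ Set.range f → v = p.first)
section Aux

variable {D : V → V → Prop}

lemma list_last_of_nondom (v : V) (hnd : ∀ w, ¬ D v w) :
    ∀ (l : List V) (hl : l ≠ []), l.Chain' D → v ∈ l → v = l.getLast hl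
  | [a], _, _, hv => by simpa using hv
  | a :: b :: t, _, hc, hv => by
    rcases List.mem_cons.mp hv with rfl | hv'
    · exact absurd (List.isChain_cons_cons.mp hc).1 (hnd b)
    · rw [List.getLast_cons (by simp)]
      exact list_last_of_nondom v hnd (b :: t) (by simp) (List.isChain_cons_cons.mp hc).2 hv'

lemma first_mem_vertSet (p : DiPath D) : p.first ∈ p.vertSet := List.head_mem p.ne

lemma last_mem_vertSet (p : DiPath D) : p.last ∈ p.vertSet := List.getLast_mem p.ne

lemma path_last_of_nondom (p : DiPath D) (v : V) (hv : v ∈ p.vertSet)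
    (hnd : ∀ w, ¬ D v w) : v = p.last :=
  list_last_of_nondom v hnd p.verts p.ne p.chain hv

lemma ncard_Ini_le_Ter [Finite V] {P : Set (DiPath D)}
    (hdisj : ∀ p ∈ P, ∀ q ∈ P, p ≠ q → Disjoint p.vertSet q.vertSet) :
    (Ini P).ncard ≤ (Ter P).ncard := by
  classical
  set f : V → V := fun v => if h : ∃ p ∈ P, p.first = v then h.choose.last else v with hf
  apply Set.ncard_le_ncard_of_injOn f
  · rintro v ⟨p, hp, rfl⟩
    have h : ∃ p' ∈ P, p'.first = p.first := ⟨p, hp, rfl⟩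
    simp only [hf, dif_pos h]
    exact ⟨h.choose, h.choose_spec.1, rfl⟩
  · rintro v ⟨p, hp, rfl⟩ w ⟨q, hq, rfl⟩ hvw
    have h1 : ∃ p' ∈ P, p'.first = p.first := ⟨p, hp, rfl⟩
    have h2 : ∃ p' ∈ P, p'.first = q.first := ⟨q, hq, rfl⟩
    simp only [hf, dif_pos h1, dif_pos h2] at hvw
    by_contra hne
    have hpq : h1.choose ≠ h2.choose := by
      intro he
      exact hne (h1.choose_spec.2 ▸ h2.choose_spec.2 ▸ he ▸ rfl)
    exact (hdisj _ h1.choose_spec.1 _ h2.choose_spec.1 hpq).ne_of_mem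
      (last_mem_vertSet _) (hvw ▸ last_mem_vertSet _) rfl

lemma ncard_Ter_le_Ini [Finite V] {P : Set (DiPath D)}
    (hdisj : ∀ p ∈ P, ∀ q ∈ P, p ≠ q → Disjoint p.vertSet q.vertSet) :
    (Ter P).ncard ≤ (Ini P).ncard := by
  classical
  set f : V → V := fun v => if h : ∃ p ∈ P, p.last = v then h.choose.first else v with hf
  apply Set.ncard_le_ncard_of_injOn f
  · rintro v ⟨p, hp, rfl⟩
    have h : ∃ p' ∈ P, p'.last = p.last := ⟨p, hp, rfl⟩
    simp only [hf, dif_pos h]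
    exact ⟨h.choose, h.choose_spec.1, rfl⟩
  · rintro v ⟨p, hp, rfl⟩ w ⟨q, hq, rfl⟩ hvw
    have h1 : ∃ p' ∈ P, p'.last = p.last := ⟨p, hp, rfl⟩
    have h2 : ∃ p' ∈ P, p'.last = q.last := ⟨q, hq, rfl⟩
    simp only [hf, dif_pos h1, dif_pos h2] at hvw
    by_contra hne
    have hpq : h1.choose ≠ h2.choose := by
      intro he
      exact hne (h1.choose_spec.2 ▸ h2.choose_spec.2 ▸ he ▸ rfl)
    exact (hdisj _ h1.choose_spec.1 _ h2.choose_spec.1 hpq).ne_of_mem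
      (first_mem_vertSet _) (hvw ▸ first_mem_vertSet _) rfl

end Aux

/-- In a finite dimaze, a set is maximally linkable iff it is linkable onto the exits. -/
theorem finite_dimaze_maximal_iff_onto [Finite V] (D : V → V → Prop) (B0 : Set V)
    (hD : IsDimaze D B0) (I : Set V) :
    MaximalIn (Linkable D B0) I ↔ LinkableOnto D B0 I := by
  constructor
  · rintro ⟨⟨P, hP, hIni⟩, hmax⟩
    refine ⟨P, hP, hIni, Set.Subset.antisymm (by rintro v ⟨p, hp, rfl⟩; exact hP.1 p hp) ?_⟩
    intro b hb
    have hnd : ∀ w, ¬ D b w := hD b hb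
    by_cases hmem : ∃ p ∈ P, b ∈ p.vertSet
    · obtain ⟨p, hp, hbp⟩ := hmem
      exact ⟨p, hp, (path_last_of_nondom p b hbp hnd).symm⟩
    · exfalso
      set pb : DiPath D := ⟨[b], by simp, by simp, List.isChain_singleton b⟩ with hpb
      have hbpb : b ∈ pb.vertSet := by simp [DiPath.vertSet, hpb]
      have hdisjpb : ∀ q ∈ P, Disjoint pb.vertSet q.vertSet := by
        intro q hq
        rw [Set.disjoint_left]
        intro x hx hxq
        simp only [DiPath.vertSet, hpb, Set.mem_setOf_eq, List.mem_singleton] at hx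
        exact hmem ⟨q, hq, hx ▸ hxq⟩
      have hlink : IsLinkage D B0 (insert pb P) := by
        constructor
        · rintro p (rfl | hp)
          · simpa [DiPath.last, hpb] using hb
          · exact hP.1 p hp
        · rintro p (rfl | hp) q (rfl | hq) hne
          · exact absurd rfl hne
          · exact hdisjpb q hq
          · exact (hdisjpb p hp).symm
          · exact hP.2 p hp q hq hne
      have hiniP' : Ini (insert pb P) = insert b I := by
        ext v
        simp only [Ini, Set.mem_setOf_eq, Set.mem_insert_iff]
        constructor
        · rintro ⟨p, (rfl | hp), rfl⟩
          · left; simp [DiPath.first, hpb]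
          · right; exact hIni ▸ ⟨p, hp, rfl⟩
        · rintro (rfl | hv)
          · exact ⟨pb, Or.inl rfl, by simp [DiPath.first, hpb]⟩
          · obtain ⟨p, hp, rfl⟩ := hIni ▸ hv
            exact ⟨p, Or.inr hp, rfl⟩
      have := hmax (insert b I) ⟨insert pb P, hlink, hiniP'⟩ (Set.subset_insert b I)
      have hbI : b ∈ I := this ▸ Set.mem_insert b I
      obtain ⟨p, hp, hpf⟩ := hIni ▸ hbI
      exact hmem ⟨p, hp, hpf ▸ first_mem_vertSet p⟩
  · rintro ⟨P, hP, hIni, hTer⟩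
    refine ⟨⟨P, hP, hIni⟩, ?_⟩
    rintro J ⟨Q, hQ, hIQ⟩ hIJ
    have hTQ : Ter Q ⊆ B0 := by rintro v ⟨p, hp, rfl⟩; exact hQ.1 p hp
    have h1 : J.ncard ≤ B0.ncard := by
      rw [← hIQ]
      exact (ncard_Ini_le_Ter hQ.2).trans (Set.ncard_le_ncard hTQ (Set.toFinite _))
    have h2 : B0.ncard ≤ I.ncard := by
      rw [← hTer, ← hIni]
      exact ncard_Ter_le_Ini hP.2
    exact (Set.eq_of_subset_of_ncard_le hIJ (h1.trans h2) (Set.toFinite _)).symm
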